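/- Let A and B be finite-dimensional C*-algebras with faithful states φ_A and φ_B such that, with respect to the induced inner products, the multiplication maps satisfy m_A m_A* = (dim_ℂ A) · id_A and m_B m_B* = (dim_ℂ B) · id_B. If T : A → B is an algebra isomorphism such that T* T is a left A-module map (T* T(a b) = a · T* T(b) for all a, b ∈ A; equivalently, T is *-preserving), then T is unitary: ⟨T x, T y⟩ = ⟨x, y⟩ for all x, y ∈ A. In particular, φ_B ∘ T = φ_A. -/

import Mathlib

/-!
STATEMENT 8.  Let A and B be finite-dimensional C*-algebras with faithful states φ_A, φ_B
such that the multiplication maps satisfy m_A m_A* = (dim A) · id and m_B m_B* = (dim B) · id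
with respect to the induced inner products (⟪x, y⟫ = φ(x* y), Mathlib convention;
the adjoints are encoded via the pairing functionals `frobPair`).  If T : A → B is an algebra
isomorphism such that T* T is a left A-module map (equivalently, T is *-preserving), then T is
unitary: ⟪T x, T y⟫_B = ⟪x, y⟫_A, i.e. φ_B((T x)* (T y)) = φ_A(x* y).  In particular
φ_B ∘ T = φ_A.  (T* : B → A is the adjoint: φ_B((T x)* y) = φ_A(x* (T* y)).)
-/

open scoped TensorProduct ComplexOrder

/-- The linear functional `⟪a ⊗ b, ·⟫` on `A ⊗[ℂ] A` for the inner product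
`⟪x, y⟫ = φ (star x * y)` induced by a positive functional `φ`. -/
noncomputable def frobPair {A : Type*} [Ring A] [StarRing A] [Algebra ℂ A]
    (φ : A →ₗ[ℂ] ℂ) (a b : A) : TensorProduct ℂ A A →ₗ[ℂ] ℂ :=
  TensorProduct.lift ((LinearMap.mul ℂ ℂ).compl₁₂
    (φ ∘ₗ LinearMap.mulLeft ℂ (star a)) (φ ∘ₗ LinearMap.mulLeft ℂ (star b)))

namespace Statement8Aux

/-- Type synonym on which we put the `φ`-inner-product structure. -/
def Syn (A : Type*) : Type _ := A

instance {A : Type*} [h : AddCommGroup A] : AddCommGroup (Syn A) := h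
instance {A : Type*} [AddCommGroup A] [h : Module ℂ A] : Module ℂ (Syn A) := h

/-- The identity linear equivalence between `Syn A` and `A`. -/
def synEquiv (A : Type*) [AddCommGroup A] [Module ℂ A] : Syn A ≃ₗ[ℂ] A where
  toFun := fun x => x
  invFun := fun x => x
  map_add' := fun _ _ => rfl
  map_smul' := fun _ _ => rfl
  left_inv := fun _ => rfl
  right_inv := fun _ => rfl

/-- A positive functional is hermitian. -/
theorem herm {A : Type*} [Ring A] [StarRing A] [Algebra ℂ A] [StarModule ℂ A]
    (φ : A →ₗ[ℂ] ℂ) (hpos : ∀ a : A, 0 ≤ φ (star a * a)) (x y : A) :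
    φ (star y * x) = starRingEnd ℂ (φ (star x * y)) := by
  have him : ∀ a : A, (φ (star a * a)).im = 0 := by
    intro a
    have := (Complex.le_def.mp (hpos a)).2
    simpa using this.symm
  have expand : ∀ (c : ℂ) (x y : A),
      φ (star (x + c • y) * (x + c • y)) =
        φ (star x * x) + c * φ (star x * y) + (starRingEnd ℂ c) * φ (star y * x)
          + (starRingEnd ℂ c) * c * φ (star y * y) := by
    intro c x y
    simp only [star_add, star_smul, add_mul, mul_add, smul_mul_assoc, mul_smul_comm,
      smul_smul, map_add, map_smul, smul_eq_mul, starRingEnd_apply]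
    ring
  have h1 := him (x + (1 : ℂ) • y)
  rw [expand] at h1
  have h2 := him (x + (Complex.I : ℂ) • y)
  rw [expand] at h2
  have hx := him x
  have hy := him y
  simp only [map_one, one_mul, mul_one, Complex.conj_I, neg_mul, Complex.I_mul_I, neg_neg,
    Complex.add_im, Complex.mul_im, Complex.neg_im, Complex.neg_re, Complex.mul_re,
    Complex.I_re, Complex.I_im] at h1 h2
  apply Complex.ext
  · simp only [Complex.conj_re]
    nlinarith [h2, hx, hy]
  · simp only [Complex.conj_im]
    nlinarith [h1, hx, hy]

theorem real_balance {n : ℕ} (t s : Fin n → ℝ)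
    (htpos : ∀ j, 0 < t j) (hspos : ∀ j, 0 < s j)
    (hprod : ∀ j, 1 ≤ t j * s j)
    (hts : ∑ j, t j = (n : ℝ)) (hss : ∑ j, s j = (n : ℝ)) :
    ∀ j, t j = 1 ∧ s j = 1 := by
  set g : Fin n → ℝ := fun j => Real.sqrt (t j) * Real.sqrt (s j) with hg
  have hgsq : ∀ j, g j ^ 2 = t j * s j := by
    intro j
    simp only [hg]
    rw [mul_pow, Real.sq_sqrt (htpos j).le, Real.sq_sqrt (hspos j).le]
  have hgnonneg : ∀ j, 0 ≤ g j := fun j =>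
    mul_nonneg (Real.sqrt_nonneg _) (Real.sqrt_nonneg _)
  have hg1 : ∀ j, 1 ≤ g j := by
    intro j
    nlinarith [hgsq j, hprod j, hgnonneg j]
  have hamgm : ∀ j, 2 * g j ≤ t j + s j := by
    intro j
    have hgj : g j = Real.sqrt (t j) * Real.sqrt (s j) := rfl
    nlinarith [sq_nonneg (Real.sqrt (t j) - Real.sqrt (s j)),
      Real.sq_sqrt (htpos j).le, Real.sq_sqrt (hspos j).le, hgj]
  have hsplit : ∑ j, (t j + s j - 2 * g j)
      = (∑ j, t j) + (∑ j, s j) - 2 * ∑ j, g j := by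
    rw [Finset.sum_sub_distrib, Finset.sum_add_distrib, Finset.mul_sum]
  have hgsum : (n : ℝ) ≤ ∑ j, g j := by
    calc (n : ℝ) = ∑ _j : Fin n, (1 : ℝ) := by simp
    _ ≤ ∑ j, g j := Finset.sum_le_sum fun j _ => hg1 j
  have hsum0 : ∑ j, (t j + s j - 2 * g j) ≤ 0 := by
    rw [hsplit, hts, hss]
    linarith
  have hterm : ∀ j ∈ Finset.univ, t j + s j - 2 * g j = 0 := by
    apply (Finset.sum_eq_zero_iff_of_nonneg ?_).mp
    · exact le_antisymm hsum0 (Finset.sum_nonneg fun j _ => by linarith [hamgm j])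
    · exact fun j _ => by linarith [hamgm j]
  have hgsum' : ∑ j, g j = (n : ℝ) := by
    have h2 : ∑ j, (t j + s j - 2 * g j)
        = (n : ℝ) + (n : ℝ) - 2 * ∑ j, g j := by
      rw [hsplit, hts, hss]
    have h3 : ∑ j, (t j + s j - 2 * g j) = 0 :=
      Finset.sum_eq_zero hterm
    rw [h3] at h2
    linarith
  have hgone : ∀ j, g j = 1 := by
    have h4 : ∀ j ∈ Finset.univ, g j - 1 = 0 := by
      apply (Finset.sum_eq_zero_iff_of_nonneg ?_).mp
      · rw [Finset.sum_sub_distrib, hgsum']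
        simp
      · exact fun j _ => by linarith [hg1 j]
    intro j
    have := h4 j (Finset.mem_univ j)
    linarith
  intro j
  have e1 : t j + s j = 2 := by
    have := hterm j (Finset.mem_univ j); rw [hgone j] at this; linarith
  have e2 : t j * s j = 1 := by
    have := hgsq j; rw [hgone j] at this; nlinarith
  constructor <;> nlinarith [e1, e2]

/-- Existence of an orthonormal basis for the `φ`-inner product, together with the
expansion property and the trace formula. -/
theorem exists_onb {A : Type*} [Ring A] [StarRing A] [Algebra ℂ A] [StarModule ℂ A]
    [FiniteDimensional ℂ A]
    (φ : A →ₗ[ℂ] ℂ)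
    (hpos : ∀ a : A, 0 ≤ φ (star a * a)) (hfaith : ∀ a : A, φ (star a * a) = 0 → a = 0) :
    ∃ u : Fin (Module.finrank ℂ A) → A,
      (∀ k l, φ (star (u k) * u l) = if k = l then 1 else 0) ∧
      (∀ x : A, ∑ k, φ (star (u k) * x) • u k = x) ∧
      (∀ y : A, LinearMap.trace ℂ A (LinearMap.mulLeft ℂ y)
          = ∑ k, φ (star (u k) * (y * u k))) := by
  classical
  letI core : InnerProductSpace.Core ℂ (Syn A) :=
    { inner := fun u v => φ (star (synEquiv A u) * synEquiv A v)
      conj_inner_symm := fun u v => by exact (herm φ hpos (synEquiv A v) (synEquiv A u)).symm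
      re_inner_nonneg := fun u => by
        have := (Complex.le_def.mp (hpos (synEquiv A u))).1
        simpa using this
      add_left := fun u v w => by
        simp only [map_add, star_add, add_mul]
      smul_left := fun u v r => by
        simp only [map_smul, star_smul, smul_mul_assoc, smul_eq_mul, starRingEnd_apply]
      definite := fun u h => by
        have := hfaith _ h
        exact (synEquiv A).injective (by simpa using this) }
  letI : NormedAddCommGroup (Syn A) := core.toNormedAddCommGroup
  letI : InnerProductSpace ℂ (Syn A) := InnerProductSpace.ofCore core.toCore
  haveI : FiniteDimensional ℂ (Syn A) := Module.Finite.equiv (synEquiv A).symm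
  have hnA : Module.finrank ℂ (Syn A) = Module.finrank ℂ A := (synEquiv A).finrank_eq
  set b := (stdOrthonormalBasis ℂ (Syn A)).reindex (finCongr hnA) with hbdef
  have hinner : ∀ v w : Syn A, (inner ℂ v w : ℂ) = φ (star (synEquiv A v) * synEquiv A w) :=
    fun _ _ => rfl
  refine ⟨fun k => synEquiv A (b k), ?_, ?_, ?_⟩
  · intro k l
    have := orthonormal_iff_ite.mp b.orthonormal k l
    rw [hinner] at this
    simpa using this
  · intro x
    have hs := b.sum_repr' ((synEquiv A).symm x)
    have := congrArg (synEquiv A) hs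
    rw [map_sum] at this
    simpa [hinner, map_smul] using this
  · intro y
    set bb : Module.Basis (Fin (Module.finrank ℂ A)) ℂ A := b.toBasis.map (synEquiv A) with hbb
    rw [LinearMap.trace_eq_matrix_trace ℂ bb]
    rw [Matrix.trace]
    apply Finset.sum_congr rfl
    intro k _
    have h1 : (LinearMap.toMatrix bb bb (LinearMap.mulLeft ℂ y)) k k
        = bb.repr (y * bb k) k := by
      rw [LinearMap.toMatrix_apply, LinearMap.mulLeft_apply]
    have h2 : bb.repr (y * bb k) k
        = b.repr ((synEquiv A).symm (y * bb k)) k := rfl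
    rw [Matrix.diag_apply, h1, h2, OrthonormalBasis.repr_apply_apply, hinner,
      LinearEquiv.apply_symm_apply]
    have h4 : bb k = synEquiv A (b k) := by
      rw [hbb, Module.Basis.map_apply, OrthonormalBasis.coe_toBasis]
    rw [h4]

/-- The key lemma: the Frobenius condition `m m* = dim·id` forces `φ` to be
the Plancherel trace `x ↦ tr(L_x)/dim`. -/
theorem key_trace {A : Type*} [Ring A] [StarRing A] [Algebra ℂ A] [StarModule ℂ A]
    [FiniteDimensional ℂ A]
    (φ : A →ₗ[ℂ] ℂ)
    (hpos : ∀ a : A, 0 ≤ φ (star a * a)) (hfaith : ∀ a : A, φ (star a * a) = 0 → a = 0)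
    (hstate : φ 1 = 1)
    (mstar : A → TensorProduct ℂ A A)
    (hadj : ∀ a b y : A, frobPair φ a b (mstar y) = φ (star (a * b) * y))
    (hQ : ∀ y : A, LinearMap.mul' ℂ A (mstar y) = (Module.finrank ℂ A : ℂ) • y)
    (y : A) :
    LinearMap.trace ℂ A (LinearMap.mulLeft ℂ y) = (Module.finrank ℂ A : ℂ) * φ y := by
  classical
  obtain ⟨u, hON, hexp, htrace⟩ := exists_onb φ hpos hfaith
  -- φ(star w) = conj φ(w)
  have hermst : ∀ w : A, φ (star w) = starRingEnd ℂ (φ w) := by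
    intro w
    have h := herm φ hpos w 1
    rw [star_one, one_mul, mul_one] at h
    have := congrArg (starRingEnd ℂ) h
    rw [Complex.conj_conj] at this
    exact this.symm
  -- values φ(star w * w) are real
  have hreal : ∀ w : A, φ (star w * w) = (((φ (star w * w)).re : ℝ) : ℂ) := by
    intro w
    have h := (Complex.le_def.mp (hpos w)).2
    apply Complex.ext
    · simp
    · simpa using h.symm
  -- frobPair on pure tensors
  have hfrobt : ∀ a b x z : A,
      frobPair φ a b (x ⊗ₜ[ℂ] z) = φ (star a * x) * φ (star b * z) := by
    intro a b x z
    simp [frobPair]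
  -- expansion of elements of A ⊗ A
  have htens : ∀ s : TensorProduct ℂ A A,
      s = ∑ k, ∑ l, frobPair φ (u k) (u l) s • (u k ⊗ₜ[ℂ] u l) := by
    intro s
    induction s using TensorProduct.induction_on with
    | zero => simp
    | tmul x z =>
      have hrow : ∀ k, ∑ l, frobPair φ (u k) (u l) (x ⊗ₜ[ℂ] z) • (u k ⊗ₜ[ℂ] u l)
          = φ (star (u k) * x) • (u k ⊗ₜ[ℂ] z) := by
        intro k
        calc ∑ l, frobPair φ (u k) (u l) (x ⊗ₜ[ℂ] z) • (u k ⊗ₜ[ℂ] u l)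
            = ∑ l, φ (star (u k) * x) • (u k ⊗ₜ[ℂ] (φ (star (u l) * z) • u l)) := by
              apply Finset.sum_congr rfl
              intro l _
              rw [hfrobt, mul_smul, TensorProduct.tmul_smul]
          _ = φ (star (u k) * x) • (u k ⊗ₜ[ℂ] ∑ l, φ (star (u l) * z) • u l) := by
              rw [← Finset.smul_sum, ← TensorProduct.tmul_sum]
          _ = φ (star (u k) * x) • (u k ⊗ₜ[ℂ] z) := by rw [hexp z]
      calc x ⊗ₜ[ℂ] z = (∑ k, φ (star (u k) * x) • u k) ⊗ₜ[ℂ] z := by rw [hexp x]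
        _ = ∑ k, φ (star (u k) * x) • (u k ⊗ₜ[ℂ] z) := by
            rw [TensorProduct.sum_tmul]
            apply Finset.sum_congr rfl
            intro k _
            rw [TensorProduct.smul_tmul']
        _ = ∑ k, ∑ l, frobPair φ (u k) (u l) (x ⊗ₜ[ℂ] z) • (u k ⊗ₜ[ℂ] u l) := by
            apply Finset.sum_congr rfl
            intro k _
            rw [hrow]
    | add s t hs ht =>
      conv_lhs => rw [hs, ht]
      rw [← Finset.sum_add_distrib]
      apply Finset.sum_congr rfl
      intro k _
      rw [← Finset.sum_add_distrib]
      apply Finset.sum_congr rfl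
      intro l _
      rw [map_add, add_smul]
  -- the central identity
  have hD : ∑ k, ∑ l, φ (star (u k * u l)) • (u k * u l) = ((Module.finrank ℂ A : ℂ)) • (1 : A) := by
    have h2 : LinearMap.mul' ℂ A (mstar 1)
        = ∑ k, ∑ l, φ (star (u k * u l)) • (u k * u l) := by
      conv_lhs => rw [htens (mstar 1)]
      rw [map_sum]
      apply Finset.sum_congr rfl
      intro k _
      rw [map_sum]
      apply Finset.sum_congr rfl
      intro l _
      rw [map_smul, LinearMap.mul'_apply, hadj, mul_one]
    rw [← h2, hQ 1]
  -- q-identity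
  have hq : ∑ k, u k * star (u k) = ((Module.finrank ℂ A : ℂ)) • (1 : A) := by
    rw [← hD]
    apply Finset.sum_congr rfl
    intro k _
    calc u k * star (u k)
        = u k * (∑ l, φ (star (u l) * star (u k)) • u l) := by rw [hexp (star (u k))]
      _ = ∑ l, φ (star (u k * u l)) • (u k * u l) := by
          rw [Finset.mul_sum]
          apply Finset.sum_congr rfl
          intro l _
          rw [mul_smul_comm, star_mul]
  -- dual vectors
  set hv : Fin (Module.finrank ℂ A) → A := fun j => ∑ k, starRingEnd ℂ (φ (u k * u j)) • u k with hhv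
  have hva : ∀ j (x : A), φ (star (hv j) * x) = φ (x * u j) := by
    intro j x
    have h1 : star (hv j) = ∑ k, φ (u k * u j) • star (u k) := by
      rw [hhv]
      rw [star_sum]
      apply Finset.sum_congr rfl
      intro k _
      rw [star_smul]
      congr 1
      rw [starRingEnd_apply, star_star]
    conv_rhs => rw [← hexp x]
    rw [h1, Finset.sum_mul, map_sum, Finset.sum_mul, map_sum]
    apply Finset.sum_congr rfl
    intro k _
    rw [smul_mul_assoc, map_smul, smul_mul_assoc, map_smul, smul_eq_mul, smul_eq_mul]
    ring
  have hvb : ∑ j, hv j * u j = ((Module.finrank ℂ A : ℂ)) • (1 : A) := by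
    rw [← hD]
    have h1 : ∀ j, hv j * u j = ∑ k, φ (star (u k * u j)) • (u k * u j) := by
      intro j
      rw [hhv]
      rw [Finset.sum_mul]
      apply Finset.sum_congr rfl
      intro k _
      rw [smul_mul_assoc]
      congr 1
      rw [hermst (u k * u j)]
    calc ∑ j, hv j * u j = ∑ j, ∑ k, φ (star (u k * u j)) • (u k * u j) := by
          apply Finset.sum_congr rfl
          intro j _
          rw [h1]
      _ = ∑ k, ∑ j, φ (star (u k * u j)) • (u k * u j) := Finset.sum_comm
  -- key scalar identities
  have hK1 : ∀ j, φ (star (hv j) * star (u j)) = 1 := by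
    intro j
    rw [hva j (star (u j))]
    have := hON j j
    simpa using this
  have hK2 : ∀ j, φ (u j * hv j) = 1 := by
    intro j
    have h := hermst (u j * hv j)
    rw [star_mul, hK1 j] at h
    have := congrArg (starRingEnd ℂ) h.symm
    rw [Complex.conj_conj] at this
    simpa using this
  have hK3 : ∀ j, φ (star (hv j) * hv j) = φ (hv j * u j) := fun j => hva j (hv j)
  have hsumT : ∑ j, φ (star (hv j) * hv j) = (Module.finrank ℂ A : ℂ) := by
    calc ∑ j, φ (star (hv j) * hv j) = ∑ j, φ (hv j * u j) := by
          exact Finset.sum_congr rfl fun j _ => hK3 j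
      _ = φ (∑ j, hv j * u j) := (map_sum φ _ _).symm
      _ = (Module.finrank ℂ A : ℂ) := by rw [hvb, map_smul, hstate, smul_eq_mul, mul_one]
  have hstst : ∀ j, star (star (u j)) * star (u j) = u j * star (u j) := by
    intro j; rw [star_star]
  have hsumS : ∑ j, φ (u j * star (u j)) = (Module.finrank ℂ A : ℂ) := by
    calc ∑ j, φ (u j * star (u j)) = φ (∑ j, u j * star (u j)) := (map_sum φ _ _).symm
      _ = (Module.finrank ℂ A : ℂ) := by rw [hq, map_smul, hstate, smul_eq_mul, mul_one]
  -- real versions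
  set tr : Fin (Module.finrank ℂ A) → ℝ := fun j => (φ (star (hv j) * hv j)).re with htrdef
  set sr : Fin (Module.finrank ℂ A) → ℝ := fun j => (φ (u j * star (u j))).re with hsrdef
  have htr : ∀ j, φ (star (hv j) * hv j) = ((tr j : ℝ) : ℂ) := fun j => hreal (hv j)
  have hsr : ∀ j, φ (u j * star (u j)) = ((sr j : ℝ) : ℂ) := by
    intro j
    have h := hreal (star (u j))
    rw [hstst j] at h
    exact h
  have htrpos : ∀ j, 0 < tr j := by
    intro j
    rcases lt_or_eq_of_le ((Complex.le_def.mp (hpos (hv j))).1) with h | h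
    · simpa using h
    · exfalso
      have h0 : φ (star (hv j) * hv j) = 0 := by
        rw [htr j]
        simp [htrdef, ← h]
      have := hfaith _ h0
      have h1 := hK1 j
      rw [this] at h1
      simp at h1
  have hsrpos : ∀ j, 0 < sr j := by
    intro j
    rcases lt_or_eq_of_le ((Complex.le_def.mp (hpos (star (u j)))).1) with h | h
    · have : (φ (star (star (u j)) * star (u j))).re = sr j := by rw [hstst j]
      rw [this] at h
      simpa using h
    · exfalso
      have h0 : φ (star (star (u j)) * star (u j)) = 0 := by
        rw [hstst j, hsr j]
        have : (φ (star (star (u j)) * star (u j))).re = sr j := by rw [hstst j]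
        rw [← this, ← h]
        simp
      have h1 := hfaith _ h0
      have h2 : u j = 0 := by
        have := congrArg star h1
        simpa using this
      have h3 := hON j j
      rw [h2] at h3
      simp at h3
  -- Cauchy-Schwarz
  have hCS : ∀ j, 1 ≤ tr j * sr j := by
    intro j
    set r : ℝ := (tr j)⁻¹ with hr
    set w : A := star (u j) - (r : ℂ) • hv j with hw
    have hsw : star w = u j - (r : ℂ) • star (hv j) := by
      rw [hw, star_sub, star_star, star_smul]
      congr 1
      rw [Complex.star_def, Complex.conj_ofReal]
    have hexpand : φ (star w * w) = ((sr j - 2 * r + r ^ 2 * tr j : ℝ) : ℂ) := by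
      rw [hw, hsw]
      simp only [sub_mul, mul_sub, smul_mul_assoc, mul_smul_comm, smul_smul, map_sub,
        map_smul, smul_eq_mul, hK1 j, hK2 j, htr j, hsr j]
      push_cast
      ring
    have h0 := hpos w
    rw [hexpand] at h0
    have h1 : (0 : ℝ) ≤ sr j - 2 * r + r ^ 2 * tr j := by
      exact_mod_cast h0
    have hrtr : r * tr j = 1 := inv_mul_cancel₀ (ne_of_gt (htrpos j))
    nlinarith [mul_nonneg (htrpos j).le h1, hrtr, htrpos j]
  -- the balance argument
  have hTS : ∑ j, tr j = (Module.finrank ℂ A : ℝ) := by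
    have : ((∑ j, tr j : ℝ) : ℂ) = ((Module.finrank ℂ A : ℝ) : ℂ) := by
      push_cast
      rw [← hsumT]
      apply Finset.sum_congr rfl
      intro j _
      rw [htr j]
    exact_mod_cast this
  have hSS : ∑ j, sr j = (Module.finrank ℂ A : ℝ) := by
    have : ((∑ j, sr j : ℝ) : ℂ) = ((Module.finrank ℂ A : ℝ) : ℂ) := by
      push_cast
      rw [← hsumS]
      apply Finset.sum_congr rfl
      intro j _
      rw [hsr j]
    exact_mod_cast this
  have hbal := real_balance tr sr htrpos hsrpos hCS hTS hSS
  -- star (u j) = hv j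
  have hsame : ∀ j, star (u j) = hv j := by
    intro j
    have h1 : φ (star (star (u j) - hv j) * (star (u j) - hv j)) = 0 := by
      rw [star_sub, star_star]
      rw [sub_mul, mul_sub, mul_sub]
      rw [map_sub, map_sub, map_sub]
      rw [hK1 j, hK2 j, htr j, hsr j, (hbal j).1, (hbal j).2]
      norm_num
    have := hfaith _ h1
    exact sub_eq_zero.mp this
  -- the other orthonormality
  have hW : ∀ k l, φ (u k * star (u l)) = if k = l then 1 else 0 := by
    intro k l
    have h1 : u k = star (hv k) := by rw [← hsame k, star_star]
    rw [h1, hva k (star (u l)), hON l k]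
    exact if_congr eq_comm rfl rfl
  -- φ is tracial
  have htrc : ∀ x z : A, φ (x * z) = φ (z * x) := by
    have main : ∀ x z : A, φ (x * star z) = φ (star z * x) := by
      intro x z
      have hstarz : star z = ∑ l, starRingEnd ℂ (φ (star (u l) * z)) • star (u l) := by
        conv_lhs => rw [← hexp z]
        rw [star_sum]
        apply Finset.sum_congr rfl
        intro l _
        rw [star_smul]
        rfl
      have hL : φ (x * star z)
          = ∑ k, ∑ l, (φ (star (u k) * x) * starRingEnd ℂ (φ (star (u l) * z)))
              * φ (u k * star (u l)) := by
        conv_lhs => rw [← hexp x, hstarz]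
        simp only [Finset.sum_mul, Finset.mul_sum, smul_mul_assoc, mul_smul_comm,
          map_sum, map_smul, smul_eq_mul]
        rw [Finset.sum_comm]
        apply Finset.sum_congr rfl
        intro k _
        apply Finset.sum_congr rfl
        intro l _
        ring
      have hR : φ (star z * x)
          = ∑ l, ∑ k, (starRingEnd ℂ (φ (star (u l) * z)) * φ (star (u k) * x))
              * φ (star (u l) * u k) := by
        conv_lhs => rw [hstarz, ← hexp x]
        simp only [Finset.sum_mul, Finset.mul_sum, smul_mul_assoc, mul_smul_comm,
          map_sum, map_smul, smul_eq_mul]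
        rw [Finset.sum_comm]
        apply Finset.sum_congr rfl
        intro l _
        apply Finset.sum_congr rfl
        intro k _
        ring
      rw [hL, hR]
      rw [Finset.sum_comm]
      apply Finset.sum_congr rfl
      intro l _
      apply Finset.sum_congr rfl
      intro k _
      rw [hW k l, hON l k]
      by_cases h : k = l
      · subst h
        simp only [if_pos rfl]
        ring
      · rw [if_neg h, if_neg (Ne.symm h)]
        ring
    intro x z
    have := main x (star z)
    rwa [star_star] at this
  -- conclusion
  calc LinearMap.trace ℂ A (LinearMap.mulLeft ℂ y)
      = ∑ k, φ (star (u k) * (y * u k)) := htrace y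
    _ = ∑ k, φ (y * (u k * star (u k))) := by
        apply Finset.sum_congr rfl
        intro k _
        rw [htrc (star (u k)) (y * u k), mul_assoc]
    _ = φ (y * ∑ k, u k * star (u k)) := by
        rw [Finset.mul_sum, map_sum]
    _ = (Module.finrank ℂ A : ℂ) * φ y := by
        rw [hq, mul_smul_comm, mul_one, map_smul, smul_eq_mul]

end Statement8Aux

theorem statement8 {A B : Type*}
    [NormedRing A] [StarRing A] [CStarRing A] [NormedAlgebra ℂ A] [StarModule ℂ A]
    [FiniteDimensional ℂ A]
    [NormedRing B] [StarRing B] [CStarRing B] [NormedAlgebra ℂ B] [StarModule ℂ B]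
    [FiniteDimensional ℂ B]
    (φA : A →ₗ[ℂ] ℂ) (φB : B →ₗ[ℂ] ℂ)
    -- φ_A and φ_B are faithful states:
    (hposA : ∀ a : A, 0 ≤ φA (star a * a)) (hfaithA : ∀ a : A, φA (star a * a) = 0 → a = 0)
    (hstateA : φA 1 = 1)
    (hposB : ∀ b : B, 0 ≤ φB (star b * b)) (hfaithB : ∀ b : B, φB (star b * b) = 0 → b = 0)
    (hstateB : φB 1 = 1)
    -- m_A m_A* = (dim A) · id:
    (mstarA : A → TensorProduct ℂ A A)
    (hadjA : ∀ a b y : A, frobPair φA a b (mstarA y) = φA (star (a * b) * y))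
    (hQA : ∀ y : A, LinearMap.mul' ℂ A (mstarA y) = (Module.finrank ℂ A : ℂ) • y)
    -- m_B m_B* = (dim B) · id:
    (mstarB : B → TensorProduct ℂ B B)
    (hadjB : ∀ a b y : B, frobPair φB a b (mstarB y) = φB (star (a * b) * y))
    (hQB : ∀ y : B, LinearMap.mul' ℂ B (mstarB y) = (Module.finrank ℂ B : ℂ) • y)
    -- T is an algebra isomorphism with adjoint T* = Ts, and T* T is a left A-module map:
    (T : A →ₗ[ℂ] B) (hTbij : Function.Bijective T)
    (hTmul : ∀ x y : A, T (x * y) = T x * T y)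
    (Ts : B → A)
    (hTadj : ∀ (x : A) (y : B), φB (star (T x) * y) = φA (star x * Ts y))
    (hmod : ∀ a b : A, Ts (T (a * b)) = a * Ts (T b)) :
    -- T is unitary, and in particular φ_B ∘ T = φ_A:
    (∀ x y : A, φB (star (T x) * T y) = φA (star x * y)) ∧
    (∀ x : A, φB (T x) = φA x) := by
  classical
  set eT : A ≃ₗ[ℂ] B := LinearEquiv.ofBijective T hTbij with heT
  have heTapp : ∀ x : A, eT x = T x := fun _ => rfl
  have hrank : Module.finrank ℂ A = Module.finrank ℂ B := eT.finrank_eq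
  have hntA : Nontrivial A := by
    refine ⟨1, 0, fun h => ?_⟩
    rw [h, map_zero] at hstateA
    exact one_ne_zero hstateA.symm
  have hdim0 : (Module.finrank ℂ A : ℂ) ≠ 0 := by
    have h : 0 < Module.finrank ℂ A := Module.finrank_pos
    exact_mod_cast Nat.cast_ne_zero.mpr h.ne'
  -- T 1 = 1
  have hTone : T 1 = 1 := by
    have h1 : ∀ bb : B, T 1 * bb = bb := by
      intro bb
      obtain ⟨a, rfl⟩ := hTbij.2 bb
      rw [← hTmul, one_mul]
    have := h1 1
    rwa [mul_one] at this
  -- conjugation invariance of the trace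
  have htraceT : ∀ x : A, LinearMap.trace ℂ B (LinearMap.mulLeft ℂ (T x))
      = LinearMap.trace ℂ A (LinearMap.mulLeft ℂ x) := by
    intro x
    have hconj : LinearMap.mulLeft ℂ (T x) = eT.conj (LinearMap.mulLeft ℂ x) := by
      apply LinearMap.ext
      intro bb
      rw [LinearEquiv.conj_apply]
      simp only [LinearMap.coe_comp, Function.comp_apply, LinearEquiv.coe_coe,
        LinearMap.mulLeft_apply]
      rw [heTapp, hTmul]
      congr 1
      rw [← heTapp, eT.apply_symm_apply]
    rw [hconj, LinearMap.trace_conj']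
  -- φ_B ∘ T = φ_A
  have goal2 : ∀ x : A, φB (T x) = φA x := by
    intro x
    have hA := Statement8Aux.key_trace φA hposA hfaithA hstateA mstarA hadjA hQA x
    have hB := Statement8Aux.key_trace φB hposB hfaithB hstateB mstarB hadjB hQB (T x)
    rw [htraceT x, hA, ← hrank] at hB
    exact (mul_left_cancel₀ hdim0 hB).symm
  refine ⟨?_, goal2⟩
  -- the module-map condition pins down c := Ts (T 1)
  have hc : ∀ a : A, Ts (T a) = a * Ts (T 1) := by
    intro a
    have := hmod a 1
    rwa [mul_one] at this
  have hφc : ∀ z : A, φA (z * Ts (T 1)) = φA z := by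
    intro z
    have h1 := hTadj 1 (T z)
    simp only [hTone, star_one, one_mul] at h1
    rw [← hc z, ← h1, goal2 z]
  have hc1 : Ts (T 1) = 1 := by
    set c : A := Ts (T 1) with hcdef
    have h0 : φA (star (c - 1) * (c - 1)) = 0 := by
      have h1 : star (c - 1) * (c - 1) = star (c - 1) * c - star (c - 1) := by
        rw [mul_sub, mul_one]
      rw [h1, map_sub, hφc (star (c - 1)), sub_self]
    have := hfaithA _ h0
    have h2 : c - 1 = 0 := this
    exact sub_eq_zero.mp h2
  intro x y
  rw [hTadj x (T y), hc y, hc1, mul_one]
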